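/- Let σ > 0, let z be a point of the Euclidean plane ℝ² with v = ‖z‖, and let g : ℝ → ℝ≥0 be measurable. Then ∫_{ℝ²} g(‖x‖)·(1/(2πσ²))·exp(−‖x − z‖²/(2σ²)) dx = ∫₀^∞ g(r)·(r/σ²)·exp(−(r² + v²)/(2σ²))·I₀(r v/σ²) dr. In other words, the distance from the origin of a point distributed normally around z with variance σ² has the Rician density f_d(x|v) = (x/σ²)·exp(−(x²+v²)/(2σ²))·I₀(xv/σ²). -/

import Mathlib

open MeasureTheory Real

/-- Modified Bessel function of the first kind of order zero:
`I₀(t) = (1/(2π))·∫₀^{2π} exp(t·cos θ) dθ`. -/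
noncomputable def besselI0 (t : ℝ) : ℝ :=
  (1 / (2 * π)) * ∫ θ in (0:ℝ)..(2 * π), Real.exp (t * Real.cos θ)

lemma besselI0_nonneg (t : ℝ) : 0 ≤ besselI0 t := by
  have h : 0 ≤ ∫ θ in (0:ℝ)..(2 * π), Real.exp (t * Real.cos θ) :=
    intervalIntegral.integral_nonneg (by positivity) (fun x _ => (Real.exp_pos _).le)
  have h2 : (0:ℝ) ≤ 1 / (2 * π) := by positivity
  exact mul_nonneg h2 h

lemma lintegral_comp_polarCoord_symm' (f : ℝ × ℝ → ENNReal) :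
    (∫⁻ p in polarCoord.target, ENNReal.ofReal p.1 * f (polarCoord.symm p)) = ∫⁻ p, f p := by
  set B : ℝ × ℝ → ℝ × ℝ →L[ℝ] ℝ × ℝ := fun p =>
    LinearMap.toContinuousLinearMap (Matrix.toLin (Module.Basis.finTwoProd ℝ) (Module.Basis.finTwoProd ℝ)
      !![cos p.2, -p.1 * sin p.2; sin p.2, p.1 * cos p.2])
  have B_det : ∀ p, (B p).det = p.1 := by
    intro p
    conv_rhs => rw [← one_mul p.1, ← cos_sq_add_sin_sq p.2]
    simp only [B, neg_mul, LinearMap.det_toContinuousLinearMap, LinearMap.det_toLin,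
      Matrix.det_fin_two_of, sub_neg_eq_add]
    ring
  symm
  calc
    ∫⁻ p, f p = ∫⁻ p in polarCoord.source, f p := by
      rw [← setLIntegral_univ]
      exact (setLIntegral_congr polarCoord_source_ae_eq_univ).symm
    _ = ∫⁻ p in polarCoord.symm '' polarCoord.target, f p := by
      rw [polarCoord.symm_image_target_eq_source]
    _ = ∫⁻ p in polarCoord.target, ENNReal.ofReal |(B p).det| * f (polarCoord.symm p) := by
      apply lintegral_image_eq_lintegral_abs_det_fderiv_mul volume
        polarCoord.open_target.measurableSet
        (fun p _ => (hasFDerivAt_polarCoord_symm p).hasFDerivWithinAt)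
        polarCoord.symm.injOn
    _ = ∫⁻ p in polarCoord.target, ENNReal.ofReal p.1 * f (polarCoord.symm p) := by
      refine setLIntegral_congr_fun polarCoord.open_target.measurableSet
        (fun p hp => ?_)
      rw [B_det, abs_of_pos hp.1]

lemma theta_lintegral (c φ : ℝ) :
    ∫⁻ θ in Set.Ioo (-π) π, ENNReal.ofReal (Real.exp (c * Real.cos (θ - φ))) =
      ENNReal.ofReal (2 * π * besselI0 c) := by
  have hcont : Continuous fun θ : ℝ => Real.exp (c * Real.cos (θ - φ)) := by continuity
  have hint : IntegrableOn (fun θ : ℝ => Real.exp (c * Real.cos (θ - φ))) (Set.Ioo (-π) π) :=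
    (hcont.integrableOn_Icc (a := -π) (b := π)).mono_set Set.Ioo_subset_Icc_self
  rw [← ofReal_integral_eq_lintegral_ofReal hint
    (Filter.Eventually.of_forall fun x => (Real.exp_pos _).le)]
  congr 1
  have hper : Function.Periodic (fun θ : ℝ => Real.exp (c * Real.cos θ)) (2 * π) := by
    intro x; simp [Real.cos_add_two_pi]
  have hle : (-π : ℝ) ≤ π := by linarith [pi_pos]
  calc ∫ θ in Set.Ioo (-π) π, Real.exp (c * Real.cos (θ - φ))
      = ∫ θ in (-π)..π, Real.exp (c * Real.cos (θ - φ)) := by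
        rw [intervalIntegral.integral_of_le hle, integral_Ioc_eq_integral_Ioo]
    _ = ∫ θ in (-π - φ)..(π - φ), Real.exp (c * Real.cos θ) := by
        rw [← intervalIntegral.integral_comp_sub_right (fun θ => Real.exp (c * Real.cos θ)) φ]
    _ = ∫ θ in (0:ℝ)..(2 * π), Real.exp (c * Real.cos θ) := by
        have := hper.intervalIntegral_add_eq (-π - φ) 0
        rw [show -π - φ + 2 * π = π - φ by ring, zero_add] at this
        exact this
    _ = 2 * π * besselI0 c := by
        rw [besselI0]
        field_simp

/-- The distance from the origin of a point distributed normally (variance `σ²`)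
around a center `z` with `‖z‖ = v` has the Rician density
`f_d(r|v) = (r/σ²)·exp(−(r²+v²)/(2σ²))·I₀(rv/σ²)`: for every measurable
`g : ℝ → ℝ≥0`,
`∫_{ℝ²} g(‖x‖)·(1/(2πσ²))·exp(−‖x−z‖²/(2σ²)) dx
  = ∫₀^∞ g(r)·(r/σ²)·exp(−(r²+v²)/(2σ²))·I₀(rv/σ²) dr`. -/
theorem rician_distance_density (σ : ℝ) (hσ : 0 < σ) (z : EuclideanSpace ℝ (Fin 2))
    (v : ℝ) (hv : v = ‖z‖) (g : ℝ → NNReal) (hg : Measurable g) :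
    (∫⁻ x : EuclideanSpace ℝ (Fin 2),
        (g ‖x‖ : ENNReal) *
          ENNReal.ofReal ((1 / (2 * π * σ ^ 2)) * Real.exp (-‖x - z‖ ^ 2 / (2 * σ ^ 2)))) =
      ∫⁻ r in Set.Ioi (0:ℝ),
        (g r : ENNReal) *
          ENNReal.ofReal ((r / σ ^ 2) * Real.exp (-(r ^ 2 + v ^ 2) / (2 * σ ^ 2)) *
            besselI0 (r * v / σ ^ 2)) := by
  have hσ2 : (σ : ℝ) ^ 2 ≠ 0 := by positivity
  -- phase of the center
  set w : ℂ := (z 0 : ℂ) + (z 1 : ℂ) * Complex.I with hw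
  set φ : ℝ := Complex.arg w with hφ
  have hvw : v = ‖w‖ := by
    rw [hv, hw, Complex.norm_add_mul_I, EuclideanSpace.norm_eq]
    simp [Fin.sum_univ_two, sq_abs]
  have hz0 : v * Real.cos φ = z 0 := by
    rw [hvw, hφ, Complex.norm_mul_cos_arg, hw]
    simp
  have hz1 : v * Real.sin φ = z 1 := by
    rw [hvw, hφ, Complex.norm_mul_sin_arg, hw]
    simp
  -- the integrand on ℝ × ℝ
  set F : ℝ × ℝ → ENNReal := fun p =>
    (g (Real.sqrt (p.1 ^ 2 + p.2 ^ 2)) : ENNReal) *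
      ENNReal.ofReal ((1 / (2 * π * σ ^ 2)) *
        Real.exp (-((p.1 - z 0) ^ 2 + (p.2 - z 1) ^ 2) / (2 * σ ^ 2))) with hF
  have hFmeas : Measurable F := by
    apply Measurable.fun_mul
    · exact (hg.comp ((continuous_fst.pow 2).add (continuous_snd.pow 2)).sqrt.measurable
        ).coe_nnreal_ennreal
    · apply Measurable.ennreal_ofReal
      fun_prop
  -- Step 1: transfer to ℝ × ℝ
  have step1 : (∫⁻ x : EuclideanSpace ℝ (Fin 2),
        (g ‖x‖ : ENNReal) *
          ENNReal.ofReal ((1 / (2 * π * σ ^ 2)) * Real.exp (-‖x - z‖ ^ 2 / (2 * σ ^ 2)))) =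
      ∫⁻ p : ℝ × ℝ, F p := by
    have he : MeasurePreserving
        ((MeasurableEquiv.toLp 2 (Fin 2 → ℝ)).symm.trans (MeasurableEquiv.finTwoArrow)) :=
      (volume_preserving_finTwoArrow ℝ).comp
        (EuclideanSpace.volume_preserving_symm_measurableEquiv_toLp (Fin 2))
    rw [← he.lintegral_comp hFmeas]
    refine lintegral_congr fun x => ?_
    have h1 : ‖x‖ = Real.sqrt ((x 0) ^ 2 + (x 1) ^ 2) := by
      rw [EuclideanSpace.norm_eq]; simp [Fin.sum_univ_two, sq_abs]
    have h2 : ‖x - z‖ ^ 2 = (x 0 - z 0) ^ 2 + (x 1 - z 1) ^ 2 := by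
      rw [EuclideanSpace.norm_eq, Real.sq_sqrt (by positivity)]
      simp [Fin.sum_univ_two, sq_abs]
    simp only [hF, h1, h2]
    rfl
  rw [step1, ← lintegral_comp_polarCoord_symm' F]
  -- Step 2: rewrite the integrand on the polar target
  have step2 : (∫⁻ p in polarCoord.target, ENNReal.ofReal p.1 * F (polarCoord.symm p)) =
      ∫⁻ p in polarCoord.target,
        ((g p.1 : ENNReal) *
          ENNReal.ofReal (p.1 / σ ^ 2 * Real.exp (-(p.1 ^ 2 + v ^ 2) / (2 * σ ^ 2)) *
            (1 / (2 * π)))) *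
          ENNReal.ofReal (Real.exp ((p.1 * v / σ ^ 2) * Real.cos (p.2 - φ))) := by
    refine setLIntegral_congr_fun polarCoord.open_target.measurableSet
      (fun p hp => ?_)
    obtain ⟨r, θ⟩ := p
    simp only [polarCoord_target, Set.mem_prod, Set.mem_Ioi, Set.mem_Ioo] at hp
    obtain ⟨hr, hθ⟩ := hp
    have hsymm : polarCoord.symm (r, θ) = (r * Real.cos θ, r * Real.sin θ) := rfl
    simp only [hF, hsymm]
    have hnorm : Real.sqrt ((r * Real.cos θ) ^ 2 + (r * Real.sin θ) ^ 2) = r := by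
      rw [show (r * Real.cos θ) ^ 2 + (r * Real.sin θ) ^ 2 = r ^ 2 by
        have := Real.sin_sq_add_cos_sq θ; nlinarith]
      exact Real.sqrt_sq hr.le
    have hdist : (r * Real.cos θ - z 0) ^ 2 + (r * Real.sin θ - z 1) ^ 2 =
        r ^ 2 + v ^ 2 - 2 * r * v * Real.cos (θ - φ) := by
      rw [← hz0, ← hz1, Real.cos_sub]
      nlinarith [Real.sin_sq_add_cos_sq θ, Real.sin_sq_add_cos_sq φ]
    rw [hnorm, hdist]
    have hexp : Real.exp (-(r ^ 2 + v ^ 2 - 2 * r * v * Real.cos (θ - φ)) / (2 * σ ^ 2)) =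
        Real.exp (-(r ^ 2 + v ^ 2) / (2 * σ ^ 2)) *
          Real.exp ((r * v / σ ^ 2) * Real.cos (θ - φ)) := by
      rw [← Real.exp_add]
      congr 1
      field_simp
      ring
    rw [hexp]
    have hkey : ENNReal.ofReal r *
        ENNReal.ofReal ((1 / (2 * π * σ ^ 2)) *
          (Real.exp (-(r ^ 2 + v ^ 2) / (2 * σ ^ 2)) *
            Real.exp ((r * v / σ ^ 2) * Real.cos (θ - φ)))) =
        ENNReal.ofReal (r / σ ^ 2 * Real.exp (-(r ^ 2 + v ^ 2) / (2 * σ ^ 2)) * (1 / (2 * π))) *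
          ENNReal.ofReal (Real.exp ((r * v / σ ^ 2) * Real.cos (θ - φ))) := by
      rw [← ENNReal.ofReal_mul hr.le, ← ENNReal.ofReal_mul (by positivity)]
      congr 1
      have hπ : (π : ℝ) ≠ 0 := Real.pi_ne_zero
      field_simp
    rw [mul_left_comm, hkey, ← mul_assoc]
  rw [step2]
  -- Step 3: Fubini
  have hH : Measurable fun p : ℝ × ℝ =>
      ((g p.1 : ENNReal) *
        ENNReal.ofReal (p.1 / σ ^ 2 * Real.exp (-(p.1 ^ 2 + v ^ 2) / (2 * σ ^ 2)) *
          (1 / (2 * π)))) *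
        ENNReal.ofReal (Real.exp ((p.1 * v / σ ^ 2) * Real.cos (p.2 - φ))) := by
    apply Measurable.fun_mul
    · apply Measurable.fun_mul
      · exact (hg.comp measurable_fst).coe_nnreal_ennreal
      · apply Measurable.ennreal_ofReal; fun_prop
    · apply Measurable.ennreal_ofReal; fun_prop
  rw [polarCoord_target, Measure.volume_eq_prod, ← Measure.prod_restrict,
    lintegral_prod _ hH.aemeasurable]
  -- Step 4: compute the inner integral and conclude
  refine setLIntegral_congr_fun measurableSet_Ioi
    (fun r hr => ?_)
  dsimp only
  rw [lintegral_const_mul _ (by fun_prop : Measurable fun θ : ℝ =>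
    ENNReal.ofReal (Real.exp ((r * v / σ ^ 2) * Real.cos (θ - φ))))]
  rw [theta_lintegral (r * v / σ ^ 2) φ]
  have hr' : (0:ℝ) < r := hr
  rw [mul_assoc, ← ENNReal.ofReal_mul (by positivity)]
  congr 2
  have hπ : (π : ℝ) ≠ 0 := Real.pi_ne_zero
  field_simp
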